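/- Let G be a simple graph on a finite vertex set V and let k, u : V → ℕ satisfy k(v) ≤ u(N[v]) for all v ∈ V. Define k' : V → ℕ by k'(v) = u(N[v]) − k(v). Then γ_{k,u}(G) = u(V) − L_{k',u}(G) (note that the function u itself is a (k,u)-dominating function, so γ_{k,u}(G) is well defined). -/
import Mathlib


open Classical Finset

/-- The closed neighborhood `N[v]` of `v` in `G`, as a finset. -/
noncomputable def closedNbhd {V : Type*} [Fintype V] (G : SimpleGraph V) (v : V) : Finset V :=
  Finset.univ.filter (fun w => G.Adj v w ∨ w = v)

lemma mem_closedNbhd_self {V : Type*} [Fintype V] (G : SimpleGraph V) (v : V) :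
    v ∈ closedNbhd G v := by simp [closedNbhd]

/-- `f` is a `(k,u)`-dominating function of `G`. -/
def IsDomFn {V : Type*} [Fintype V] (G : SimpleGraph V) (k u f : V → ℕ) : Prop :=
  ∀ v, f v ≤ u v ∧ k v ≤ ∑ w ∈ closedNbhd G v, f w

/-- `f` is a `(k,u)`-packing function of `G`. -/
def IsPackFn {V : Type*} [Fintype V] (G : SimpleGraph V) (k u f : V → ℕ) : Prop :=
  ∀ v, f v ≤ u v ∧ ∑ w ∈ closedNbhd G v, f w ≤ k v

/-- `γ_{k,u}(G)`: minimum weight of a `(k,u)`-dominating function. -/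
noncomputable def gammaKU {V : Type*} [Fintype V] (G : SimpleGraph V) (k u : V → ℕ) : ℕ :=
  sInf {s | ∃ f, IsDomFn G k u f ∧ s = ∑ v, f v}

/-- `L_{k,u}(G)`: maximum weight of a `(k,u)`-packing function. -/
noncomputable def LKU {V : Type*} [Fintype V] (G : SimpleGraph V) (k u : V → ℕ) : ℕ :=
  sSup {s | ∃ f, IsPackFn G k u f ∧ s = ∑ v, f v}

/-- if `k(v) ≤ u(N[v])` for all `v` and `k'(v) = u(N[v]) - k(v)`,
then `γ_{k,u}(G) = u(V) - L_{k',u}(G)`. -/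
theorem stmt_1 {V : Type*} [Fintype V] (G : SimpleGraph V) (k u : V → ℕ)
    (hk : ∀ v, k v ≤ ∑ w ∈ closedNbhd G v, u w) :
    gammaKU G k u =
      (∑ v, u v) - LKU G (fun v => (∑ w ∈ closedNbhd G v, u w) - k v) u := by
  classical
  set M := ∑ v, u v with hM
  set S : Set ℕ := {s | ∃ f, IsDomFn G k u f ∧ s = ∑ v, f v} with hS
  set T : Set ℕ := {s | ∃ f, IsPackFn G (fun v => (∑ w ∈ closedNbhd G v, u w) - k v) u f ∧ s = ∑ v, f v} with hT
  have hSne : S.Nonempty := ⟨M, u, fun v => ⟨le_rfl, hk v⟩, rfl⟩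
  have hTne : T.Nonempty := ⟨0, (fun _ => 0), fun v => by simp, by simp⟩
  have hTbdd : ∀ t ∈ T, t ≤ M := by
    rintro t ⟨g, hg, rfl⟩
    exact Finset.sum_le_sum fun v _ => (hg v).1
  have hSbdd : ∀ s ∈ S, s ≤ M := by
    rintro s ⟨f, hf, rfl⟩
    exact Finset.sum_le_sum fun v _ => (hf v).1
  -- dom → pack complement
  have hdom : ∀ s ∈ S, M - s ∈ T := by
    rintro s ⟨f, hf, rfl⟩
    refine ⟨fun v => u v - f v, fun v => ⟨Nat.sub_le _ _, ?_⟩, ?_⟩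
    · dsimp only
      rw [Finset.sum_tsub_distrib _ (fun w _ => (hf w).1)]
      exact Nat.sub_le_sub_left (hf v).2 _
    · dsimp only
      rw [Finset.sum_tsub_distrib _ (fun w _ => (hf w).1)]
  -- pack → dom complement
  have hpack : ∀ t ∈ T, M - t ∈ S := by
    rintro t ⟨g, hg, rfl⟩
    refine ⟨fun v => u v - g v, fun v => ⟨Nat.sub_le _ _, ?_⟩, ?_⟩
    · dsimp only
      rw [Finset.sum_tsub_distrib _ (fun w _ => (hg w).1)]
      have h1 : ∑ w ∈ closedNbhd G v, g w ≤ ∑ w ∈ closedNbhd G v, u w - k v := (hg v).2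
      have h2 : ∑ w ∈ closedNbhd G v, g w ≤ ∑ w ∈ closedNbhd G v, u w :=
        Finset.sum_le_sum fun w _ => (hg w).1
      have h3 := hk v
      omega
    · dsimp only
      rw [Finset.sum_tsub_distrib _ (fun w _ => (hg w).1)]
  have hTmem : sSup T ∈ T := Nat.sSup_mem hTne ⟨M, hTbdd⟩
  have hSmem : sInf S ∈ S := Nat.sInf_mem hSne
  have h1 : sInf S ≤ M - sSup T := Nat.sInf_le (hpack _ hTmem)
  have h2 : M - sInf S ≤ sSup T := le_csSup ⟨M, fun t ht => hTbdd t ht⟩ (hdom _ hSmem)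
  have h3 : sInf S ≤ M := hSbdd _ hSmem
  have h4 : sSup T ≤ M := hTbdd _ hTmem
  show sInf S = M - sSup T
  omega
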